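/- Let n = 4f+1 be an odd prime with f odd, and suppose there exist integers x, y with n = x² + 4y² such that the cyclotomic numbers of order 4 with respect to the generator α satisfy the f-odd table. Let s_2 and s_5 be the binary sequences of length n with support sets D_0∪D_2 and D_1∪D_3 respectively. Then R_{s_2,s_5}(0) = 2 − n, and R_{s_2,s_5}(τ) = 1 for every 1 ≤ τ < n. -/
import Mathlib


/-- Cross-correlation of two sequences of length `N` over `ℤ_H`, with `ξ = exp(2πi/H)`. -/
noncomputable def crossCorr (H N : ℕ) (s t : ZMod N → ZMod H) (τ : ZMod N) : ℂ :=
  ∑ i ∈ Finset.range N,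
    Complex.exp (2 * (Real.pi : ℂ) * Complex.I / (H : ℂ)) ^ ((s (i : ZMod N) - t ((i : ZMod N) + τ)).val)

/-- Cross-correlation of two binary sequences of length `N` (an integer). -/
def binCorr (N : ℕ) (s t : ZMod N → ZMod 2) (τ : ZMod N) : ℤ :=
  ∑ i ∈ Finset.range N, (-1 : ℤ) ^ ((s (i : ZMod N) + t ((i : ZMod N) + τ)).val)

/-- Cross-correlation of two quaternary sequences of length `N`, with `ξ = √-1`. -/
noncomputable def quadCorr (N : ℕ) (s t : ZMod N → ZMod 4) (τ : ZMod N) : ℂ :=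
  ∑ i ∈ Finset.range N, Complex.I ^ ((s (i : ZMod N) - t ((i : ZMod N) + τ)).val)

/-- Interleaving `u = I(a, b)`: `u(2i) = a(i)`, `u(2i+1) = b(i)`. -/
def interleaveSeq {H : ℕ} (n : ℕ) (a b : ZMod n → ZMod H) : ZMod (2 * n) → ZMod H :=
  fun k => if k.val % 2 = 0 then a ((k.val / 2 : ℕ) : ZMod n) else b ((k.val / 2 : ℕ) : ZMod n)

/-- The inverse Gray mapping `φ⁻¹ : ℤ₂ × ℤ₂ → ℤ₄`. -/
def grayInv (a b : ZMod 2) : ZMod 4 :=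
  if a = 0 then (if b = 0 then 0 else 1) else (if b = 0 then 3 else 2)

/-- Construction I: the quaternary sequence of length `2n` built from
`a₀, a₁, a₂, a₃` and bits `e₀, e₁, e₂`. -/
def constructionI (n : ℕ) (a0 a1 a2 a3 : ZMod n → ZMod 2)
    (e0 e1 e2 : ZMod 2) : ZMod (2 * n) → ZMod 4 :=
  let lam : ZMod n := (((n + 1) / 2 : ℕ) : ZMod n)
  let c := interleaveSeq n a0 (fun i => e0 + a1 (i + lam))
  let d := interleaveSeq n (fun i => e1 + a2 i) (fun i => e2 + a3 (i + lam))
  fun i => grayInv (c i) (d i)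

/-- The cyclotomic class `D_i` of order 4 w.r.t. the generator `α`. -/
def cycClass (n f : ℕ) (α : ZMod n) (i : ℕ) : Set (ZMod n) :=
  {x | ∃ t < f, x = α ^ (4 * t + i)}

/-- The cyclotomic number `(i, j)` of order 4: `|(D_i + 1) ∩ D_j|`. -/
noncomputable def cycNum (n f : ℕ) (α : ZMod n) (i j : ℕ) : ℕ :=
  Set.ncard {x : ZMod n | x - 1 ∈ cycClass n f α i ∧ x ∈ cycClass n f α j}

open Classical in
/-- The binary sequence of length `n` with support set `D_i ∪ D_j`. -/
noncomputable def cycSeq (n f : ℕ) (α : ZMod n) (i j : ℕ) : ZMod n → ZMod 2 :=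
  fun x => if x ∈ cycClass n f α i ∪ cycClass n f α j then 1 else 0

/-- Six binary sequences with supports `D₀∪D₁, D₀∪D₂, D₀∪D₃, D₁∪D₂, D₁∪D₃, D₂∪D₃`. -/
noncomputable def sixSeq (n f : ℕ) (α : ZMod n) : Fin 6 → ZMod n → ZMod 2
  | 0 => cycSeq n f α 0 1
  | 1 => cycSeq n f α 0 2
  | 2 => cycSeq n f α 0 3
  | 3 => cycSeq n f α 1 2
  | 4 => cycSeq n f α 1 3
  | 5 => cycSeq n f α 2 3

/-- 16 times the cyclotomic numbers of order 4 in the `f` odd case. -/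
def oddTable16 (n x y : ℤ) (i j : ℕ) : ℤ :=
  match i, j with
  | 0, 0 => n - 7 + 2*x
  | 0, 1 => n + 1 + 2*x - 8*y
  | 0, 2 => n + 1 - 6*x
  | 0, 3 => n + 1 + 2*x + 8*y
  | 1, 0 => n - 3 - 2*x
  | 1, 1 => n - 3 - 2*x
  | 1, 2 => n + 1 + 2*x + 8*y
  | 1, 3 => n + 1 + 2*x - 8*y
  | 2, 0 => n - 7 + 2*x
  | 2, 1 => n - 3 - 2*x
  | 2, 2 => n - 7 + 2*x
  | 2, 3 => n - 3 - 2*x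
  | 3, 0 => n - 3 - 2*x
  | 3, 1 => n + 1 + 2*x + 8*y
  | 3, 2 => n + 1 + 2*x - 8*y
  | 3, 3 => n - 3 - 2*x
  | _, _ => 0

/-- 16 times the cyclotomic numbers of order 4 in the `f` even case. -/
def evenTable16 (n x y : ℤ) (i j : ℕ) : ℤ :=
  match i, j with
  | 0, 0 => n - 11 - 6*x
  | 0, 1 => n - 3 + 2*x + 8*y
  | 0, 2 => n - 3 + 2*x
  | 0, 3 => n - 3 + 2*x - 8*y
  | 1, 0 => n - 3 + 2*x + 8*y
  | 1, 1 => n - 3 + 2*x - 8*y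
  | 1, 2 => n + 1 - 2*x
  | 1, 3 => n + 1 - 2*x
  | 2, 0 => n - 3 + 2*x
  | 2, 1 => n + 1 - 2*x
  | 2, 2 => n - 3 + 2*x
  | 2, 3 => n + 1 - 2*x
  | 3, 0 => n - 3 + 2*x - 8*y
  | 3, 1 => n + 1 - 2*x
  | 3, 2 => n + 1 - 2*x
  | 3, 3 => n - 3 + 2*x + 8*y
  | _, _ => 0


section Aux
open Finset

private lemma neg_one_pow_zmod2 (a b : ZMod 2) :
    ((-1 : ℤ) ^ (a + b).val) = (-1 : ℤ) ^ a.val * (-1 : ℤ) ^ b.val := by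
  revert a b; decide

private lemma sum_range_eq_sum_zmod {n : ℕ} [NeZero n] (g : ZMod n → ℤ) :
    ∑ i ∈ Finset.range n, g (i : ZMod n) = ∑ x : ZMod n, g x := by
  refine Finset.sum_nbij' (fun i => (i : ZMod n)) (fun x => x.val) ?_ ?_ ?_ ?_ ?_
  · intro a _; exact Finset.mem_univ _
  · intro a _; exact Finset.mem_range.mpr (ZMod.val_lt a)
  · intro a ha; exact ZMod.val_cast_of_lt (Finset.mem_range.mp ha)
  · intro a _; exact ZMod.natCast_rightInverse a
  · intro a _; rfl

end Aux
section Aux2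
open Finset

variable {n f : ℕ}

private lemma alpha_ne_zero (hp : n.Prime) (hnf : n = 4 * f + 1) (hf1 : 1 ≤ f)
    {α : ZMod n} (hα : ∀ z : ZMod n, z ≠ 0 → ∃ k : ℕ, z = α ^ k) : α ≠ 0 := by
  haveI : Fact n.Prime := ⟨hp⟩
  haveI : NeZero n := ⟨hp.ne_zero⟩
  have h2 : ((2 : ℕ) : ZMod n) ≠ 0 := by
    rw [Ne, ZMod.natCast_eq_zero_iff]
    intro h; have := Nat.le_of_dvd (by norm_num) h; omega
  obtain ⟨k, hk⟩ := hα _ h2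
  intro h0
  rcases Nat.eq_zero_or_pos k with rfl | hk0
  · rw [pow_zero] at hk
    have : ((2 : ℕ) : ZMod n) - 1 = 0 := by rw [hk]; ring
    rw [show ((2:ℕ) : ZMod n) - 1 = 1 by push_cast; ring] at this
    exact one_ne_zero this
  · rw [h0, zero_pow hk0.ne'] at hk
    exact h2 hk

private lemma orderOf_alpha (hp : n.Prime) (hnf : n = 4 * f + 1) (hf1 : 1 ≤ f)
    {α : ZMod n} (hα : ∀ z : ZMod n, z ≠ 0 → ∃ k : ℕ, z = α ^ k) : orderOf α = 4 * f := by
  haveI : Fact n.Prime := ⟨hp⟩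
  haveI : NeZero n := ⟨hp.ne_zero⟩
  have hα0 := alpha_ne_zero hp hnf hf1 hα
  have hdvd : orderOf α ∣ 4 * f := by
    apply orderOf_dvd_of_pow_eq_one
    have := ZMod.pow_card_sub_one_eq_one hα0
    have h41 : n - 1 = 4 * f := by omega
    rwa [h41] at this
  have hpos : 0 < orderOf α := by
    rcases Nat.eq_zero_or_pos (orderOf α) with h | h
    · rw [h] at hdvd; have := Nat.eq_zero_of_zero_dvd hdvd; omega
    · exact h
  have hge : 4 * f ≤ orderOf α := by
    have hsub : (Finset.univ.erase (0 : ZMod n)) ⊆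
        (Finset.range (orderOf α)).image (fun j => α ^ j) := by
      intro z hz
      obtain ⟨k, rfl⟩ := hα z (Finset.ne_of_mem_erase hz)
      refine Finset.mem_image.mpr ⟨k % orderOf α, ?_, pow_mod_orderOf α k⟩
      exact Finset.mem_range.mpr (Nat.mod_lt _ hpos)
    have h1 := Finset.card_le_card hsub
    have h2 := Finset.card_image_le (s := Finset.range (orderOf α)) (f := fun j => α ^ j)
    rw [Finset.card_erase_of_mem (Finset.mem_univ _), Finset.card_univ, ZMod.card,
      Finset.card_range] at *
    omega
  exact Nat.le_antisymm (Nat.le_of_dvd (by omega) hdvd) hge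

private lemma isSquare_pow_iff (hp : n.Prime) (hnf : n = 4 * f + 1) (hf1 : 1 ≤ f)
    {α : ZMod n} (hα : ∀ z : ZMod n, z ≠ 0 → ∃ k : ℕ, z = α ^ k) (k : ℕ) :
    IsSquare (α ^ k) ↔ 2 ∣ k := by
  haveI : Fact n.Prime := ⟨hp⟩
  have hα0 := alpha_ne_zero hp hnf hf1 hα
  have hord := orderOf_alpha hp hnf hf1 hα
  constructor
  · rintro ⟨b, hb⟩
    have hb0 : b ≠ 0 := by
      intro h; rw [h, mul_zero] at hb; exact pow_ne_zero k hα0 hb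
    obtain ⟨m, rfl⟩ := hα b hb0
    set u : (ZMod n)ˣ := Units.mk0 α hα0 with hu
    have huo : orderOf u = 4 * f := by rw [← orderOf_units]; exact hord
    have huk : u ^ k = u ^ (2 * m) := by
      apply Units.ext
      simp only [Units.val_pow_eq_pow_val, hu, Units.val_mk0]
      rw [hb, two_mul, pow_add]
    have hmod : k ≡ 2 * m [MOD 4 * f] := by
      rw [pow_eq_pow_iff_modEq, huo] at huk; exact huk
    have h2 : k ≡ 2 * m [MOD 2] := hmod.of_dvd ⟨2 * f, by ring⟩
    have : k % 2 = 2 * m % 2 := h2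
    omega
  · rintro ⟨m, rfl⟩
    exact ⟨α ^ m, by rw [← pow_add]; ring_nf⟩

end Aux2

section Aux3
open Finset

variable {n f : ℕ}

private lemma mem_D02_iff (hp : n.Prime) (hnf : n = 4 * f + 1) (hf1 : 1 ≤ f)
    {α : ZMod n} (hα : ∀ z : ZMod n, z ≠ 0 → ∃ k : ℕ, z = α ^ k) (z : ZMod n) :
    z ∈ cycClass n f α 0 ∪ cycClass n f α 2 ↔ z ≠ 0 ∧ IsSquare z := by
  haveI : Fact n.Prime := ⟨hp⟩
  have hα0 := alpha_ne_zero hp hnf hf1 hα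
  have hord := orderOf_alpha hp hnf hf1 hα
  constructor
  · rintro (⟨t, ht, rfl⟩ | ⟨t, ht, rfl⟩)
    · exact ⟨pow_ne_zero _ hα0, (isSquare_pow_iff hp hnf hf1 hα _).mpr ⟨2 * t, by ring⟩⟩
    · exact ⟨pow_ne_zero _ hα0, (isSquare_pow_iff hp hnf hf1 hα _).mpr ⟨2 * t + 1, by ring⟩⟩
  · rintro ⟨hz, hsq⟩
    obtain ⟨k, rfl⟩ := hα z hz
    have h2 : 2 ∣ k := (isSquare_pow_iff hp hnf hf1 hα k).mp hsq
    have hk : α ^ (k % (4 * f)) = α ^ k := by rw [← hord]; exact pow_mod_orderOf α k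
    set r := k % (4 * f) with hr
    have hrlt : r < 4 * f := Nat.mod_lt _ (by omega)
    have hr2 : 2 ∣ r := by
      have : 2 ∣ 4 * f := ⟨2 * f, by ring⟩
      rw [hr]; exact (Nat.dvd_mod_iff this).mpr h2
    have h4 : r % 4 = 0 ∨ r % 4 = 2 := by omega
    rcases h4 with h | h
    · left
      exact ⟨r / 4, by omega, by rw [← hk]; congr 1; omega⟩
    · right
      exact ⟨r / 4, by omega, by rw [← hk]; congr 1; omega⟩

private lemma mem_D13_iff (hp : n.Prime) (hnf : n = 4 * f + 1) (hf1 : 1 ≤ f)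
    {α : ZMod n} (hα : ∀ z : ZMod n, z ≠ 0 → ∃ k : ℕ, z = α ^ k) (z : ZMod n) :
    z ∈ cycClass n f α 1 ∪ cycClass n f α 3 ↔ z ≠ 0 ∧ ¬IsSquare z := by
  haveI : Fact n.Prime := ⟨hp⟩
  have hα0 := alpha_ne_zero hp hnf hf1 hα
  have hord := orderOf_alpha hp hnf hf1 hα
  constructor
  · rintro (⟨t, ht, rfl⟩ | ⟨t, ht, rfl⟩)
    · refine ⟨pow_ne_zero _ hα0, fun hs => ?_⟩
      have := (isSquare_pow_iff hp hnf hf1 hα _).mp hs; omega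
    · refine ⟨pow_ne_zero _ hα0, fun hs => ?_⟩
      have := (isSquare_pow_iff hp hnf hf1 hα _).mp hs; omega
  · rintro ⟨hz, hsq⟩
    obtain ⟨k, rfl⟩ := hα z hz
    have h2 : ¬ 2 ∣ k := fun h => hsq ((isSquare_pow_iff hp hnf hf1 hα k).mpr h)
    have hk : α ^ (k % (4 * f)) = α ^ k := by rw [← hord]; exact pow_mod_orderOf α k
    set r := k % (4 * f) with hr
    have hrlt : r < 4 * f := Nat.mod_lt _ (by omega)
    have hr2 : ¬ 2 ∣ r := by
      have : 2 ∣ 4 * f := ⟨2 * f, by ring⟩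
      rw [hr]; exact fun hh => h2 ((Nat.dvd_mod_iff this).mp hh)
    have h4 : r % 4 = 1 ∨ r % 4 = 3 := by omega
    rcases h4 with h | h
    · left
      exact ⟨r / 4, by omega, by rw [← hk]; congr 1; omega⟩
    · right
      exact ⟨r / 4, by omega, by rw [← hk]; congr 1; omega⟩

private lemma char_sum_aux {n : ℕ} [Fact n.Prime] (hn4 : n % 4 = 1) (τ : ZMod n) (hτ : τ ≠ 0) :
    ∑ x : ZMod n, quadraticChar (ZMod n) x * quadraticChar (ZMod n) (x + τ) = -1 := by
  set χ := quadraticChar (ZMod n) with hχ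
  have hchar : ringChar (ZMod n) ≠ 2 := by
    rw [ZMod.ringChar_zmod_n]; omega
  have hχ1 : χ ≠ 1 := quadraticChar_ne_one hchar
  have hneg1 : χ (-1) = 1 := by
    rw [hχ, quadraticChar_neg_one hchar, ZMod.card]
    exact ZMod.χ₄_nat_one_mod_four hn4
  have hreindex : ∑ x : ZMod n, χ x * χ (x + τ)
      = ∑ u : ZMod n, χ (-τ * u) * χ (-τ * u + τ) := by
    exact (Fintype.sum_bijective _
      (mulLeft_bijective₀ (-τ) (neg_ne_zero.mpr hτ)) _ _ (fun u => rfl)).symm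
  rw [hreindex]
  have hpt : ∀ u : ZMod n, χ (-τ * u) * χ (-τ * u + τ) = χ u * χ (1 - u) := by
    intro u
    have h1 : (-τ) * u + τ = τ * (1 - u) := by ring
    have h2 : (-τ) * u = (-1) * τ * u := by ring
    rw [h1, h2, map_mul, map_mul, map_mul]
    have hsq : χ τ * χ τ = 1 := by
      have := quadraticChar_sq_one (F := ZMod n) hτ
      rwa [pow_two] at this
    rw [hneg1]
    calc 1 * χ τ * χ u * (χ τ * χ (1 - u)) = (χ τ * χ τ) * (χ u * χ (1 - u)) := by ring
      _ = χ u * χ (1 - u) := by rw [hsq]; ring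
  rw [Finset.sum_congr rfl (fun u _ => hpt u)]
  have : ∑ u : ZMod n, χ u * χ (1 - u) = jacobiSum χ χ := rfl
  rw [this, hχ]
  nth_rewrite 2 [← (quadraticChar_isQuadratic (ZMod n)).inv]
  rw [jacobiSum_nontrivial_inv (quadraticChar_ne_one hchar), ← hχ, hneg1]

end Aux3



theorem stmt19 (n f : ℕ) (hp : n.Prime) (hnf : n = 4 * f + 1) (hf : Odd f)
    (x y : ℤ) (hxy : (n : ℤ) = x ^ 2 + 4 * y ^ 2)
    (α : ZMod n) (hα : ∀ z : ZMod n, z ≠ 0 → ∃ k : ℕ, z = α ^ k)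
    (hTab : ∀ i < 4, ∀ j < 4, 16 * (cycNum n f α i j : ℤ) = oddTable16 (n : ℤ) x y i j) :
    binCorr n (cycSeq n f α 0 2) (cycSeq n f α 1 3) 0 = 2 - (n : ℤ) ∧
      ∀ τ : ℕ, 1 ≤ τ → τ < n →
        binCorr n (cycSeq n f α 0 2) (cycSeq n f α 1 3) (τ : ZMod n) = 1 := by
  classical
  haveI : Fact n.Prime := ⟨hp⟩
  haveI : NeZero n := ⟨hp.ne_zero⟩
  have hf1 : 1 ≤ f := by obtain ⟨k, hk⟩ := hf; omega
  have hn4 : n % 4 = 1 := by omega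
  set χ := quadraticChar (ZMod n) with hχ
  have hchar : ringChar (ZMod n) ≠ 2 := by rw [ZMod.ringChar_zmod_n]; omega
  have hneg1 : χ (-1) = 1 := by
    rw [hχ, quadraticChar_neg_one hchar, ZMod.card]
    exact ZMod.χ₄_nat_one_mod_four hn4
  set s := cycSeq n f α 0 2 with hsdef
  set t := cycSeq n f α 1 3 with htdef
  have hs : ∀ z : ZMod n, s z = if z ≠ 0 ∧ IsSquare z then 1 else 0 := by
    intro z
    rw [hsdef]
    unfold cycSeq
    exact if_congr (mem_D02_iff hp hnf hf1 hα z) rfl rfl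
  have ht : ∀ z : ZMod n, t z = if z ≠ 0 ∧ ¬ IsSquare z then 1 else 0 := by
    intro z
    rw [htdef]
    unfold cycSeq
    exact if_congr (mem_D13_iff hp hnf hf1 hα z) rfl rfl
  have hs0 : s 0 = 0 := by rw [hs]; simp
  have ht0 : t 0 = 0 := by rw [ht]; simp
  have hsval : ∀ z : ZMod n, z ≠ 0 → ((-1:ℤ)) ^ (s z).val = - χ z := by
    intro z hz
    rcases em (IsSquare z) with h | h
    · rw [hs z, if_pos ⟨hz, h⟩, (quadraticChar_one_iff_isSquare hz).mpr h]
      norm_num [ZMod.val_one]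
    · rw [hs z, if_neg (by tauto), quadraticChar_neg_one_iff_not_isSquare.mpr h]
      norm_num [ZMod.val_zero]
  have htval : ∀ z : ZMod n, z ≠ 0 → ((-1:ℤ)) ^ (t z).val = χ z := by
    intro z hz
    rcases em (IsSquare z) with h | h
    · rw [ht z, if_neg (by tauto), (quadraticChar_one_iff_isSquare hz).mpr h]
      norm_num [ZMod.val_zero]
    · rw [ht z, if_pos ⟨hz, h⟩, quadraticChar_neg_one_iff_not_isSquare.mpr h]
      norm_num [ZMod.val_one]
  constructor
  · -- τ = 0
    have hcorr : binCorr n s t 0 = ∑ x : ZMod n, (-1:ℤ) ^ ((s x + t (x + 0)).val) :=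
      sum_range_eq_sum_zmod (fun x => (-1:ℤ) ^ ((s x + t (x + 0)).val))
    rw [hcorr]
    have hpt : ∀ x : ZMod n, (-1:ℤ) ^ ((s x + t (x + 0)).val)
        = (if x = 0 then (2:ℤ) else 0) - 1 := by
      intro x
      rw [add_zero]
      by_cases hx : x = 0
      · subst hx
        rw [hs0, ht0, if_pos rfl]
        norm_num [ZMod.val_zero]
      · rw [if_neg hx]
        rcases em (IsSquare x) with h | h
        · rw [hs x, ht x, if_pos ⟨hx, h⟩, if_neg (by tauto)]
          norm_num [ZMod.val_one]
        · rw [hs x, ht x, if_neg (by tauto), if_pos ⟨hx, h⟩]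
          norm_num [ZMod.val_one]
    rw [Finset.sum_congr rfl (fun x _ => hpt x), Finset.sum_sub_distrib,
      Finset.sum_ite_eq' Finset.univ (0 : ZMod n) (fun _ => (2:ℤ)),
      if_pos (Finset.mem_univ _), Finset.sum_const, Finset.card_univ, ZMod.card,
      nsmul_eq_mul, mul_one]
  · -- τ ≠ 0
    intro τ' hτ1 hτn
    set τ : ZMod n := (τ' : ZMod n) with hτdef
    have hτ : τ ≠ 0 := by
      rw [hτdef, Ne, ZMod.natCast_eq_zero_iff]
      intro h; have := Nat.le_of_dvd (by omega) h; omega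
    have hcorr : binCorr n s t τ = ∑ x : ZMod n, (-1:ℤ) ^ ((s x + t (x + τ)).val) :=
      sum_range_eq_sum_zmod (fun x => (-1:ℤ) ^ ((s x + t (x + τ)).val))
    rw [hcorr]
    have hχ0 : χ (0 : ZMod n) = 0 := quadraticChar_zero
    have hpt : ∀ x : ZMod n, (-1:ℤ) ^ ((s x + t (x + τ)).val)
        = -(χ x * χ (x + τ)) + ((if x = 0 then χ τ else 0) + (if x = -τ then -(χ x) else 0)) := by
      intro x
      by_cases hx : x = 0
      · subst hx
        have hne : (0 : ZMod n) ≠ -τ := by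
          intro h; exact hτ (by rw [← neg_eq_zero, ← h])
        rw [hs0, zero_add, zero_add, if_pos rfl, if_neg hne, hχ0, htval τ hτ]
        ring
      · by_cases hx2 : x = -τ
        · have hxτ : x + τ = 0 := by rw [hx2]; ring
          rw [hxτ, ht0, add_zero, if_neg hx, if_pos hx2, hχ0, hsval x hx]
          ring
        · have hxτ : x + τ ≠ 0 := by
            intro h; exact hx2 (eq_neg_of_add_eq_zero_left h)
          rw [neg_one_pow_zmod2, hsval x hx, htval _ hxτ, if_neg hx, if_neg hx2]
          ring
    rw [Finset.sum_congr rfl (fun x _ => hpt x), Finset.sum_add_distrib,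
      Finset.sum_add_distrib]
    have h1 : ∑ x : ZMod n, -(χ x * χ (x + τ)) = 1 := by
      rw [Finset.sum_neg_distrib, char_sum_aux hn4 τ hτ]
      norm_num
    have h2 : ∑ x : ZMod n, (if x = 0 then χ τ else 0) = χ τ := by
      rw [Finset.sum_ite_eq' Finset.univ (0 : ZMod n) (fun _ => χ τ)]
      exact if_pos (Finset.mem_univ _)
    have h3 : ∑ x : ZMod n, (if x = -τ then -(χ x) else 0) = -(χ τ) := by
      rw [Finset.sum_ite_eq' Finset.univ (-τ : ZMod n) (fun x => -(χ x))]
      rw [if_pos (Finset.mem_univ _)]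
      have : (-τ : ZMod n) = (-1) * τ := by ring
      rw [this, map_mul, hneg1, one_mul]
    rw [h1, h2, h3]
    ring
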